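/- Let φ be a (possibly unbounded) graded KMS functional on a C*-algebra 𝒜 with grading γ and time evolution α. Then φ is α-invariant: φ(α_t(B)) = φ(B) for all B ∈ Dom φ and all t ∈ ℝ. -/

import Mathlib

/-- The closed strip `ℝ + i[0,1]`. -/
def closedStrip : Set ℂ := {z : ℂ | 0 ≤ z.im ∧ z.im ≤ 1}

/-- The open strip `ℝ + i(0,1)`. -/
def openStrip : Set ℂ := {z : ℂ | 0 < z.im ∧ z.im < 1}

open Complex Set Metric intervalIntegral Filter Bornology

noncomputable section KMSAux

/-! ### A Morera-type lemma: analytic continuation across a horizontal line -/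

/-- Horizontal edge integral. -/
def hInt (f : ℂ → ℂ) (a b y : ℝ) : ℂ := ∫ x : ℝ in a..b, f (x + y * I)

/-- Vertical edge integral. -/
def vInt (f : ℂ → ℂ) (x a b : ℝ) : ℂ := I • ∫ y : ℝ in a..b, f (x + y * I)

lemma hInt_integrable {f : ℂ → ℂ} {U : Set ℂ} (hc : ContinuousOn f U)
    {a b y : ℝ} (h : ∀ x ∈ uIcc a b, (x : ℂ) + y * I ∈ U) :
    IntervalIntegrable (fun x : ℝ => f ((x : ℂ) + y * I)) MeasureTheory.volume a b :=
  (hc.comp ((by fun_prop : Continuous fun x : ℝ => (x : ℂ) + y * I)).continuousOn h).intervalIntegrable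

lemma vInt_integrable {f : ℂ → ℂ} {U : Set ℂ} (hc : ContinuousOn f U)
    {x a b : ℝ} (h : ∀ y ∈ uIcc a b, (x : ℂ) + y * I ∈ U) :
    IntervalIntegrable (fun y : ℝ => f ((x : ℂ) + y * I)) MeasureTheory.volume a b :=
  (hc.comp ((by fun_prop : Continuous fun y : ℝ => (x : ℂ) + y * I)).continuousOn h).intervalIntegrable

lemma rect_zero_base {f : ℂ → ℂ} {U : Set ℂ} {m : ℝ}
    (hc : ContinuousOn f U) (hd : ∀ z ∈ U, z.im ≠ m → DifferentiableAt ℂ f z)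
    {a b c d : ℝ} (hsub : uIcc a b ×ℂ uIcc c d ⊆ U) (hm : m ∉ Ioo (c ⊓ d) (c ⊔ d)) :
    hInt f a b c - hInt f a b d + vInt f b c d - vInt f a c d = 0 := by
  have key := Complex.integral_boundary_rect_eq_zero_of_differentiable_on_off_countable f
      ⟨a, c⟩ ⟨b, d⟩ ∅ countable_empty
      (hc.mono hsub)
      (by
        rintro x ⟨hx, -⟩
        rw [Complex.mem_reProdIm] at hx
        have hxU : x ∈ U := by
          apply hsub
          rw [Complex.mem_reProdIm]
          exact ⟨Ioo_subset_Icc_self hx.1, Ioo_subset_Icc_self hx.2⟩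
        refine hd x hxU fun him => hm ?_
        rw [← him]; exact hx.2)
  simpa only [hInt, vInt] using key

lemma reProdIm_mono {s₁ s₂ t₁ t₂ : Set ℝ} (hs : s₁ ⊆ s₂) (ht : t₁ ⊆ t₂) :
    s₁ ×ℂ t₁ ⊆ s₂ ×ℂ t₂ := by
  intro z hz
  rw [Complex.mem_reProdIm] at hz ⊢
  exact ⟨hs hz.1, ht hz.2⟩

lemma rect_zero {f : ℂ → ℂ} {U : Set ℂ} {m : ℝ}
    (hc : ContinuousOn f U) (hd : ∀ z ∈ U, z.im ≠ m → DifferentiableAt ℂ f z)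
    {a b c d : ℝ} (hsub : uIcc a b ×ℂ uIcc c d ⊆ U) :
    hInt f a b c - hInt f a b d + vInt f b c d - vInt f a c d = 0 := by
  by_cases hm : m ∈ Ioo (c ⊓ d) (c ⊔ d)
  · have hmu : m ∈ uIcc c d := Ioo_subset_Icc_self hm
    have hcm : uIcc c m ⊆ uIcc c d := uIcc_subset_uIcc left_mem_uIcc hmu
    have hmd : uIcc m d ⊆ uIcc c d := uIcc_subset_uIcc hmu right_mem_uIcc
    have hnot1 : m ∉ Ioo (c ⊓ m) (c ⊔ m) := by
      rintro ⟨h1, h2⟩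
      rw [inf_lt_iff] at h1; rw [lt_sup_iff] at h2
      rcases h1 with h1 | h1
      · rcases h2 with h2 | h2
        · exact absurd (h1.trans h2) (lt_irrefl _)
        · exact absurd h2 (lt_irrefl m)
      · exact absurd h1 (lt_irrefl m)
    have hnot2 : m ∉ Ioo (m ⊓ d) (m ⊔ d) := by
      rintro ⟨h1, h2⟩
      rw [inf_lt_iff] at h1; rw [lt_sup_iff] at h2
      rcases h1 with h1 | h1
      · exact absurd h1 (lt_irrefl m)
      · rcases h2 with h2 | h2
        · exact absurd h2 (lt_irrefl m)
        · exact absurd (h1.trans h2) (lt_irrefl _)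
    have h1 := rect_zero_base hc hd ((reProdIm_mono subset_rfl hcm).trans hsub) hnot1
    have h2 := rect_zero_base hc hd ((reProdIm_mono subset_rfl hmd).trans hsub) hnot2
    have memU : ∀ x ∈ uIcc a b, ∀ y ∈ uIcc c d, (x : ℂ) + y * I ∈ U := by
      intro x hx y hy
      apply hsub
      rw [Complex.mem_reProdIm]
      constructor <;> simp [hx, hy]
    have hvb : vInt f b c m + vInt f b m d = vInt f b c d := by
      unfold vInt
      rw [← smul_add, intervalIntegral.integral_add_adjacent_intervals
        (vInt_integrable hc fun y hy => memU b right_mem_uIcc y (hcm hy))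
        (vInt_integrable hc fun y hy => memU b right_mem_uIcc y (hmd hy))]
    have hva : vInt f a c m + vInt f a m d = vInt f a c d := by
      unfold vInt
      rw [← smul_add, intervalIntegral.integral_add_adjacent_intervals
        (vInt_integrable hc fun y hy => memU a left_mem_uIcc y (hcm hy))
        (vInt_integrable hc fun y hy => memU a left_mem_uIcc y (hmd hy))]
    linear_combination h1 + h2 - hvb + hva
  · exact rect_zero_base hc hd hsub hm

lemma abs_sub_le_of_mem_uIoc {a b x : ℝ} (hx : x ∈ Set.uIoc a b) : |x - a| ≤ |b - a| := by
  rw [Set.mem_uIoc] at hx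
  rcases abs_cases (b - a) with ⟨h1, h2⟩ | ⟨h1, h2⟩ <;> rw [abs_le] <;>
    rcases hx with ⟨h3, h4⟩ | ⟨h3, h4⟩ <;> constructor <;> linarith

lemma abs_sub_le_of_mem_uIcc {a b x c r : ℝ} (ha : |a - c| ≤ r) (hb : |b - c| ≤ r)
    (hx : x ∈ Set.uIcc a b) : |x - c| ≤ r := by
  rw [Set.mem_uIcc] at hx
  rw [abs_le] at ha hb ⊢
  rcases hx with ⟨h1, h2⟩ | ⟨h1, h2⟩ <;> constructor <;> linarith

lemma morera_line {f : ℂ → ℂ} {U : Set ℂ} (hU : IsOpen U) {m : ℝ}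
    (hc : ContinuousOn f U) (hd : ∀ z ∈ U, z.im ≠ m → DifferentiableAt ℂ f z)
    {z₀ : ℂ} (hz₀ : z₀ ∈ U) : DifferentiableAt ℂ f z₀ := by
  by_cases him : z₀.im ≠ m
  · exact hd z₀ hz₀ him
  push_neg at him
  obtain ⟨ε, hε, hball⟩ := Metric.isOpen_iff.1 hU z₀ hz₀
  have hr0 : 0 < ε / 3 := by positivity
  set r := ε / 3 with hrdef
  have hRU : ∀ {x y : ℝ}, |x - z₀.re| ≤ r → |y - z₀.im| ≤ r → (x : ℂ) + y * I ∈ U := by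
    intro x y hx hy
    apply hball
    rw [mem_ball, Complex.dist_eq]
    calc ‖(x : ℂ) + y * I - z₀‖
        ≤ |((x : ℂ) + y * I - z₀).re| + |((x : ℂ) + y * I - z₀).im| :=
          norm_le_abs_re_add_abs_im _
      _ = |x - z₀.re| + |y - z₀.im| := by simp
      _ ≤ r + r := add_le_add hx hy
      _ < ε := by rw [hrdef]; linarith
  have hmr : |m - z₀.im| ≤ r := by rw [him]; simp [le_of_lt hr0]
  set Q : Set ℂ := Ioo (z₀.re - r) (z₀.re + r) ×ℂ Ioo (z₀.im - r) (z₀.im + r) with hQdef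
  have hQopen : IsOpen Q := IsOpen.reProdIm isOpen_Ioo isOpen_Ioo
  have hz₀Q : z₀ ∈ Q := by
    rw [hQdef, Complex.mem_reProdIm]
    constructor <;> constructor <;> simp <;> linarith
  have hQmem : ∀ z ∈ Q, |z.re - z₀.re| ≤ r ∧ |z.im - z₀.im| ≤ r := by
    intro z hz
    rw [hQdef, Complex.mem_reProdIm] at hz
    constructor <;> rw [abs_le] <;>
      exact ⟨by linarith [hz.1.1, hz.2.1], by linarith [hz.1.2, hz.2.2]⟩
  have hQU : Q ⊆ U := by
    intro z hz
    have h1 := hQmem z hz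
    have h2 := hRU h1.1 h1.2
    simpa [Complex.re_add_im] using h2
  have hrect : ∀ {p q u v : ℝ}, |p - z₀.re| ≤ r → |q - z₀.re| ≤ r → |u - z₀.im| ≤ r →
      |v - z₀.im| ≤ r → uIcc p q ×ℂ uIcc u v ⊆ U := by
    intro p q u v hp hq hu hv z hz
    rw [Complex.mem_reProdIm] at hz
    have h1 := abs_sub_le_of_mem_uIcc hp hq hz.1
    have h2 := abs_sub_le_of_mem_uIcc hu hv hz.2
    have := hRU h1 h2
    simpa [Complex.re_add_im] using this
  have hseg : ∀ {p q u v : ℝ}, |p - z₀.re| ≤ r → |q - z₀.re| ≤ r → |u - z₀.im| ≤ r →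
      |v - z₀.im| ≤ r → ∀ x ∈ uIcc p q, ∀ y ∈ uIcc u v, (x : ℂ) + y * I ∈ U := by
    intro p q u v hp hq hu hv x hx y hy
    exact hRU (abs_sub_le_of_mem_uIcc hp hq hx) (abs_sub_le_of_mem_uIcc hu hv hy)
  have hz₀r : |z₀.re - z₀.re| ≤ r := by simp [le_of_lt hr0]
  have hz₀i : |z₀.im - z₀.im| ≤ r := by simp [le_of_lt hr0]
  set P : ℂ → ℂ := fun z => hInt f z₀.re z.re m + vInt f z.re m z.im with hPdef
  have key : ∀ z₁ ∈ Q, ∀ z ∈ Q, P z - P z₁ =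
      hInt f z₁.re z.re z₁.im + vInt f z.re z₁.im z.im := by
    intro z₁ hz₁ z hz
    obtain ⟨hre1, him1⟩ := hQmem z₁ hz₁
    obtain ⟨hre2, him2⟩ := hQmem z hz
    have hA : hInt f z₀.re z₁.re m + hInt f z₁.re z.re m = hInt f z₀.re z.re m := by
      unfold hInt
      rw [intervalIntegral.integral_add_adjacent_intervals
        (hInt_integrable hc fun x hx => hseg hz₀r hre1 hmr hmr x hx m left_mem_uIcc)
        (hInt_integrable hc fun x hx => hseg hre1 hre2 hmr hmr x hx m left_mem_uIcc)]
    have hB : vInt f z.re m z₁.im + vInt f z.re z₁.im z.im = vInt f z.re m z.im := by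
      unfold vInt
      rw [← smul_add, intervalIntegral.integral_add_adjacent_intervals
        (vInt_integrable hc fun y hy => hseg hre2 hre2 hmr him1 z.re left_mem_uIcc y hy)
        (vInt_integrable hc fun y hy => hseg hre2 hre2 him1 him2 z.re left_mem_uIcc y hy)]
    have hR := rect_zero (m := m) hc hd (hrect hre1 hre2 hmr him1)
    rw [hPdef]
    linear_combination -hA - hB + hR
  have hder : ∀ z₁ ∈ Q, HasDerivAt P (f z₁) z₁ := by
    intro z₁ hz₁
    rw [hasDerivAt_iff_isLittleO, Asymptotics.isLittleO_iff]
    intro c hc0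
    have hfc : ContinuousAt f z₁ := hc.continuousAt (hU.mem_nhds (hQU hz₁))
    obtain ⟨δ₁, hδ₁, hδf⟩ := Metric.continuousAt_iff.1 hfc (c / 2) (by positivity)
    obtain ⟨δ₂, hδ₂, hδQ⟩ := Metric.isOpen_iff.1 hQopen z₁ hz₁
    have hδ0 : 0 < min (δ₁ / 2) δ₂ := by positivity
    filter_upwards [Metric.ball_mem_nhds z₁ hδ0] with z hz
    have hzQ : z ∈ Q := hδQ (mem_of_mem_of_subset hz (ball_subset_ball (min_le_right _ _)))
    have hdist : dist z z₁ < δ₁ / 2 := lt_of_lt_of_le (mem_ball.1 hz) (min_le_left _ _)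
    have hre : |z.re - z₁.re| ≤ dist z z₁ := by
      rw [Complex.dist_eq]
      simpa using Complex.abs_re_le_norm (z - z₁)
    have him' : |z.im - z₁.im| ≤ dist z z₁ := by
      rw [Complex.dist_eq]
      simpa using Complex.abs_im_le_norm (z - z₁)
    obtain ⟨hre1, him1⟩ := hQmem z₁ hz₁
    obtain ⟨hre2, him2⟩ := hQmem z hzQ
    have hseg1 : ∀ x ∈ Set.uIoc z₁.re z.re, ‖f ((x : ℂ) + z₁.im * I) - f z₁‖ ≤ c / 2 := by
      intro x hx
      have hx' : |x - z₁.re| ≤ |z.re - z₁.re| := abs_sub_le_of_mem_uIoc hx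
      have hdd : dist ((x : ℂ) + z₁.im * I) z₁ < δ₁ := by
        rw [Complex.dist_eq]
        calc ‖(x : ℂ) + z₁.im * I - z₁‖
            ≤ |((x : ℂ) + z₁.im * I - z₁).re| + |((x : ℂ) + z₁.im * I - z₁).im| :=
              norm_le_abs_re_add_abs_im _
          _ = |x - z₁.re| := by simp
          _ < δ₁ := by linarith [hre.trans_lt hdist, hx'.trans hre]
      rw [← dist_eq_norm]
      exact le_of_lt (hδf hdd)
    have hseg2 : ∀ y ∈ Set.uIoc z₁.im z.im, ‖f ((z.re : ℂ) + y * I) - f z₁‖ ≤ c / 2 := by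
      intro y hy
      have hy' : |y - z₁.im| ≤ |z.im - z₁.im| := abs_sub_le_of_mem_uIoc hy
      have hdd : dist ((z.re : ℂ) + y * I) z₁ < δ₁ := by
        rw [Complex.dist_eq]
        calc ‖(z.re : ℂ) + y * I - z₁‖
            ≤ |((z.re : ℂ) + y * I - z₁).re| + |((z.re : ℂ) + y * I - z₁).im| :=
              norm_le_abs_re_add_abs_im _
          _ = |z.re - z₁.re| + |y - z₁.im| := by simp
          _ < δ₁ / 2 + δ₁ / 2 := by
              have h1 := hy'.trans him'
              have h2 := hre.trans_lt hdist
              linarith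
          _ = δ₁ := by ring
      rw [← dist_eq_norm]
      exact le_of_lt (hδf hdd)
    have hint1 : IntervalIntegrable (fun x : ℝ => f ((x : ℂ) + z₁.im * I))
        MeasureTheory.volume z₁.re z.re :=
      hInt_integrable hc fun x hx => hseg hre1 hre2 him1 him1 x hx z₁.im left_mem_uIcc
    have hint2 : IntervalIntegrable (fun y : ℝ => f ((z.re : ℂ) + y * I))
        MeasureTheory.volume z₁.im z.im :=
      vInt_integrable hc fun y hy => hseg hre2 hre2 him1 him2 z.re left_mem_uIcc y hy
    have heA : hInt f z₁.re z.re z₁.im - ((z.re - z₁.re : ℝ) : ℂ) * f z₁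
        = ∫ x in z₁.re..z.re, (f ((x : ℂ) + z₁.im * I) - f z₁) := by
      unfold hInt
      rw [intervalIntegral.integral_sub hint1 intervalIntegrable_const,
        intervalIntegral.integral_const, Complex.real_smul]
    have heB : vInt f z.re z₁.im z.im - ((z.im - z₁.im : ℝ) : ℂ) * I * f z₁
        = I • ∫ y in z₁.im..z.im, (f ((z.re : ℂ) + y * I) - f z₁) := by
      unfold vInt
      rw [intervalIntegral.integral_sub hint2 intervalIntegrable_const,
        intervalIntegral.integral_const, smul_sub, Complex.real_smul, smul_eq_mul, smul_eq_mul]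
      ring
    have hdecomp : P z - P z₁ - (z - z₁) • f z₁
        = (hInt f z₁.re z.re z₁.im - ((z.re - z₁.re : ℝ) : ℂ) * f z₁)
          + (vInt f z.re z₁.im z.im - ((z.im - z₁.im : ℝ) : ℂ) * I * f z₁) := by
      rw [key z₁ hz₁ z hzQ, smul_eq_mul]
      have hzd : z - z₁ = ((z.re - z₁.re : ℝ) : ℂ) + ((z.im - z₁.im : ℝ) : ℂ) * I := by
        simp [Complex.ext_iff]
      rw [hzd]
      ring
    rw [hdecomp]
    calc ‖(hInt f z₁.re z.re z₁.im - ((z.re - z₁.re : ℝ) : ℂ) * f z₁)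
          + (vInt f z.re z₁.im z.im - ((z.im - z₁.im : ℝ) : ℂ) * I * f z₁)‖
        ≤ ‖hInt f z₁.re z.re z₁.im - ((z.re - z₁.re : ℝ) : ℂ) * f z₁‖
          + ‖vInt f z.re z₁.im z.im - ((z.im - z₁.im : ℝ) : ℂ) * I * f z₁‖ := norm_add_le _ _
      _ ≤ c / 2 * |z.re - z₁.re| + c / 2 * |z.im - z₁.im| := by
          gcongr
          · rw [heA]
            exact intervalIntegral.norm_integral_le_of_norm_le_const hseg1
          · rw [heB, norm_smul, Complex.norm_I, one_mul]
            exact intervalIntegral.norm_integral_le_of_norm_le_const hseg2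
      _ ≤ c / 2 * ‖z - z₁‖ + c / 2 * ‖z - z₁‖ := by
          rw [← dist_eq_norm]
          gcongr <;> first | exact hre | exact him'
      _ = c * ‖z - z₁‖ := by ring
  have hPdiff : DifferentiableOn ℂ P Q := fun z hz =>
    ((hder z hz).differentiableAt).differentiableWithinAt
  have hPan : AnalyticOnNhd ℂ P Q := hPdiff.analyticOnNhd hQopen
  have hderivan : AnalyticOnNhd ℂ (deriv P) Q := hPan.deriv_of_isOpen hQopen
  have hfeq : f =ᶠ[nhds z₀] deriv P := by
    filter_upwards [hQopen.mem_nhds hz₀Q] with z hz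
    exact ((hder z hz).deriv).symm
  exact (Filter.EventuallyEq.differentiableAt_iff hfeq).2 ((hderivan z₀ hz₀Q).differentiableAt)


/-! ### Liouville-type theorem for periodic entire functions of polynomial growth -/


lemma periodic_poly_const : ∀ (N : ℕ) (G : ℂ → ℂ) (c : ℝ), Differentiable ℂ G →
    (∀ z, ‖G z‖ ≤ c * (1 + ‖z‖) ^ N) → (∀ z, G (z + I) = G z) → ∀ z, G z = G 0 := by
  intro N
  induction N with
  | zero =>
    intro G c hG hb hp z
    apply hG.apply_eq_apply_of_bounded
    refine isBounded_iff_forall_norm_le.2 ⟨c, ?_⟩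
    rintro - ⟨w, rfl⟩
    simpa using hb w
  | succ n ih =>
    intro G c hG hb hp z
    have hc0 : 0 ≤ c := le_trans (norm_nonneg (G 0)) (by simpa using hb 0)
    have hG' : Differentiable ℂ (deriv G) :=
      analyticOnNhd_univ_iff_differentiable.1 ((analyticOnNhd_univ_iff_differentiable.2 hG).deriv)
    have hb' : ∀ w, ‖deriv G w‖ ≤ (2 ^ (n + 1) * c) * (1 + ‖w‖) ^ n := by
      intro w
      have hR : (0:ℝ) < 1 + ‖w‖ := by positivity
      have hball : ∀ x ∈ Metric.sphere w (1 + ‖w‖), ‖G x‖ ≤ c * (2 * (1 + ‖w‖)) ^ (n + 1) := by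
        intro x hx
        have hdx : dist x w = 1 + ‖w‖ := mem_sphere.1 hx
        have hxw : ‖x‖ ≤ ‖w‖ + (1 + ‖w‖) := by
          have h1 : ‖x‖ - ‖w‖ ≤ ‖x - w‖ := norm_sub_norm_le x w
          rw [← dist_eq_norm] at h1
          linarith [hdx ▸ h1]
        calc ‖G x‖ ≤ c * (1 + ‖x‖) ^ (n + 1) := hb x
          _ ≤ c * (2 * (1 + ‖w‖)) ^ (n + 1) := by
              have h2 : (1:ℝ) + ‖x‖ ≤ 2 * (1 + ‖w‖) := by linarith
              have h3 : (0:ℝ) ≤ 1 + ‖x‖ := by positivity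
              exact mul_le_mul_of_nonneg_left (pow_le_pow_left₀ h3 h2 _) hc0
      have hest := Complex.norm_deriv_le_of_forall_mem_sphere_norm_le hR hG.diffContOnCl hball
      calc ‖deriv G w‖ ≤ c * (2 * (1 + ‖w‖)) ^ (n + 1) / (1 + ‖w‖) := hest
        _ = (2 ^ (n + 1) * c) * (1 + ‖w‖) ^ n := by
            rw [mul_pow, pow_succ]
            field_simp
            ring
    have hp' : ∀ w, deriv G (w + I) = deriv G w := by
      intro w
      have h1 : deriv (fun u => G (u + I)) w = deriv G (w + I) := by
        simpa using deriv_comp_add_const G I w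
      rw [← h1]
      congr 1
      exact funext hp
    have hdconst : ∀ w, deriv G w = deriv G 0 := ih (deriv G) _ hG' hb' hp'
    set c₀ := deriv G 0 with hc₀
    have hH : ∀ u v : ℂ, G u - c₀ * u = G v - c₀ * v := by
      apply is_const_of_deriv_eq_zero
      · exact hG.sub (by fun_prop)
      · intro x
        have hdm : HasDerivAt (fun u : ℂ => c₀ * u) c₀ x := by
          simpa using (hasDerivAt_id x).const_mul c₀
        rw [deriv_fun_sub (hG x) hdm.differentiableAt, hdconst x, hdm.deriv]
        simp [hc₀]
    have h2 : G (0 + I) = G 0 := hp 0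
    rw [zero_add] at h2
    have h1 := hH I 0
    have hI : c₀ * I = 0 := by linear_combination h2 - h1
    have hc₀0 : c₀ = 0 := by
      rcases mul_eq_zero.1 hI with h | h
      · exact h
      · exact absurd h I_ne_zero
    have h3 := hH z 0
    rw [hc₀0] at h3
    simpa using h3


/-! ### The periodic extension of a function on the closed strip -/


lemma isOpen_openStrip : IsOpen openStrip := by
  have : openStrip = Complex.im ⁻¹' Ioo 0 1 := rfl
  rw [this]
  exact isOpen_Ioo.preimage Complex.continuous_im

/-- Periodic extension of a function on the strip. -/
def pext (F : ℂ → ℂ) : ℂ → ℂ := fun z => F ⟨z.re, Int.fract z.im⟩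

variable {F : ℂ → ℂ}

lemma pext_apply_real (t : ℝ) : pext F (t : ℂ) = F (t : ℂ) := by
  unfold pext
  congr 1
  apply Complex.ext <;> simp [Int.fract]

lemma pext_periodic (z : ℂ) : pext F (z + I) = pext F z := by
  unfold pext
  congr 2 <;> simp [Int.fract_add_one]

section
variable (hc : ContinuousOn F closedStrip) (hper : ∀ t : ℝ, F ((t : ℂ) + I) = F (t : ℂ))

include hper in
lemma slab_eq (n : ℤ) (z : ℂ) (h1 : (n : ℝ) ≤ z.im) (h2 : z.im ≤ (n : ℝ) + 1) :
    pext F z = F (z - (n : ℂ) * I) := by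
  rcases lt_or_eq_of_le h2 with h2' | h2'
  · have hfloor : ⌊z.im⌋ = n := Int.floor_eq_iff.2 ⟨h1, h2'⟩
    unfold pext
    congr 1
    apply Complex.ext
    · simp
    · simp [Int.fract, hfloor]
  · have hfr : Int.fract z.im = 0 := by
      rw [h2']
      have : ((n : ℝ) + 1) = ((n + 1 : ℤ) : ℝ) := by push_cast; ring
      rw [this, Int.fract_intCast]
    have e2 : z - (n : ℂ) * I = (z.re : ℂ) + I := by
      apply Complex.ext <;> simp [h2']
    have e1 : (⟨z.re, (0 : ℝ)⟩ : ℂ) = (z.re : ℂ) := by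
      apply Complex.ext <;> simp
    unfold pext
    rw [hfr, e1, e2, hper z.re]

include hc hper in
lemma pext_continuous : Continuous (pext F) := by
  have cslab : ∀ n : ℤ, ContinuousOn (pext F)
      {z : ℂ | (n : ℝ) ≤ z.im ∧ z.im ≤ (n : ℝ) + 1} := by
    intro n
    have heq : EqOn (pext F) (fun z => F (z - (n : ℂ) * I))
        {z : ℂ | (n : ℝ) ≤ z.im ∧ z.im ≤ (n : ℝ) + 1} :=
      fun z hz => slab_eq hper n z hz.1 hz.2
    refine ContinuousOn.congr ?_ heq
    refine ContinuousOn.comp hc ((continuous_id.sub continuous_const).continuousOn) ?_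
    intro z hz
    refine ⟨?_, ?_⟩ <;> simp only [Complex.sub_im, Complex.mul_im, Complex.I_im, Complex.I_re,
      Complex.intCast_re, Complex.intCast_im, mul_zero, mul_one, zero_mul, sub_zero, add_zero,
      zero_add, zero_sub, sub_neg_eq_add] <;> [linarith [hz.1]; linarith [hz.2]]
  rw [continuous_iff_continuousAt]
  intro z₀
  set n : ℤ := ⌊z₀.im⌋ with hn
  have hfl : (n : ℝ) ≤ z₀.im := Int.floor_le z₀.im
  have hfu : z₀.im < (n : ℝ) + 1 := Int.lt_floor_add_one z₀.im
  by_cases h0 : Int.fract z₀.im = 0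
  · have him : z₀.im = (n : ℝ) := by
      have : z₀.im - (n : ℝ) = 0 := h0
      linarith
    have c1 : ContinuousWithinAt (pext F)
        {z : ℂ | ((n - 1 : ℤ) : ℝ) ≤ z.im ∧ z.im ≤ ((n - 1 : ℤ) : ℝ) + 1} z₀ :=
      (cslab (n - 1)) z₀ ⟨by push_cast; linarith, by push_cast; linarith⟩
    have c2 : ContinuousWithinAt (pext F)
        {z : ℂ | ((n : ℤ) : ℝ) ≤ z.im ∧ z.im ≤ ((n : ℤ) : ℝ) + 1} z₀ :=
      (cslab n) z₀ ⟨by push_cast; linarith, by push_cast; linarith⟩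
    refine (c1.union c2).continuousAt ?_
    refine mem_of_superset (Metric.ball_mem_nhds z₀ one_pos) ?_
    intro w hw
    have hwim : |w.im - z₀.im| < 1 := by
      have h1 : |(w - z₀).im| ≤ ‖w - z₀‖ := Complex.abs_im_le_norm _
      have h2 : dist w z₀ < 1 := mem_ball.1 hw
      rw [Complex.dist_eq] at h2
      simp only [Complex.sub_im] at h1
      linarith
    rw [abs_lt] at hwim
    rcases le_total w.im (n : ℝ) with hle | hle
    · left; constructor <;> push_cast <;> linarith
    · right; constructor <;> push_cast <;> linarith
  · have hlt : (n : ℝ) < z₀.im := by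
      rcases lt_or_eq_of_le hfl with h | h
      · exact h
      · exact absurd (by rw [Int.fract]; rw [← hn]; linarith) h0
    refine ((cslab n) z₀ ⟨le_of_lt hlt, le_of_lt hfu⟩).continuousAt ?_
    refine mem_of_superset (Metric.ball_mem_nhds z₀
      (lt_min (by linarith : (0:ℝ) < z₀.im - n) (by linarith : (0:ℝ) < (n:ℝ) + 1 - z₀.im))) ?_
    intro w hw
    have hwim : |w.im - z₀.im| < min (z₀.im - n) ((n : ℝ) + 1 - z₀.im) := by
      have h1 : |(w - z₀).im| ≤ ‖w - z₀‖ := Complex.abs_im_le_norm _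
      have h2 := mem_ball.1 hw
      rw [Complex.dist_eq] at h2
      simp only [Complex.sub_im] at h1
      linarith
    rw [abs_lt, lt_min_iff] at hwim
    obtain ⟨ha, hb1, hb2⟩ := hwim
    have hm1 : min (z₀.im - (n:ℝ)) ((n:ℝ) + 1 - z₀.im) ≤ z₀.im - (n:ℝ) := min_le_left _ _
    exact ⟨by linarith, by linarith⟩



include hc hper in
lemma pext_differentiable (hd : DifferentiableOn ℂ F openStrip) :
    Differentiable ℂ (pext F) := by
  have hcont := pext_continuous hc hper
  have hoff : ∀ z : ℂ, Int.fract z.im ≠ 0 → DifferentiableAt ℂ (pext F) z := by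
    intro z hz
    set n : ℤ := ⌊z.im⌋ with hn
    have hfl : (n : ℝ) ≤ z.im := Int.floor_le _
    have hfu : z.im < (n : ℝ) + 1 := Int.lt_floor_add_one _
    have hlt : (n : ℝ) < z.im := by
      rcases lt_or_eq_of_le hfl with h | h
      · exact h
      · exact absurd (by rw [Int.fract, ← hn]; linarith) hz
    have hopen : IsOpen {w : ℂ | (n : ℝ) < w.im ∧ w.im < (n : ℝ) + 1} :=
      isOpen_Ioo.preimage Complex.continuous_im
    have heq : pext F =ᶠ[nhds z] fun w => F (w - (n : ℂ) * I) := by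
      filter_upwards [hopen.mem_nhds ⟨hlt, hfu⟩] with w hw
      exact slab_eq hper n w (le_of_lt hw.1) (le_of_lt hw.2)
    rw [heq.differentiableAt_iff]
    have hmem : z - (n : ℂ) * I ∈ openStrip := by
      constructor <;> simp <;> linarith
    exact (hd.differentiableAt (isOpen_openStrip.mem_nhds hmem)).comp z
      ((differentiable_id.sub_const _).differentiableAt)
  intro z
  by_cases h0 : Int.fract z.im = 0
  · set n : ℤ := ⌊z.im⌋ with hn
    have him : z.im = (n : ℝ) := by
      have h1 : z.im - (n : ℝ) = 0 := h0
      linarith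
    have hopen : IsOpen {w : ℂ | (n : ℝ) - 1 < w.im ∧ w.im < (n : ℝ) + 1} :=
      isOpen_Ioo.preimage Complex.continuous_im
    refine morera_line (m := (n : ℝ)) hopen hcont.continuousOn ?_ ?_
    · intro w hw hwm
      refine hoff w fun hfr => hwm ?_
      have hfl' : w.im = (⌊w.im⌋ : ℝ) := by
        have h1 : w.im - (⌊w.im⌋ : ℝ) = 0 := hfr
        linarith
      have hb1 : (n : ℝ) - 1 < (⌊w.im⌋ : ℝ) := by rw [← hfl']; exact hw.1
      have hb2 : ((⌊w.im⌋ : ℝ)) < (n : ℝ) + 1 := by rw [← hfl']; exact hw.2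
      have hib1 : (n : ℤ) - 1 < ⌊w.im⌋ := by exact_mod_cast (by push_cast; linarith : ((n - 1 : ℤ) : ℝ) < (⌊w.im⌋ : ℝ))
      have hib2 : ⌊w.im⌋ < (n : ℤ) + 1 := by exact_mod_cast (by push_cast; linarith : ((⌊w.im⌋ : ℤ) : ℝ) < ((n + 1 : ℤ) : ℝ))
      have hnn : ⌊w.im⌋ = n := by omega
      rw [hfl', hnn]
    · exact ⟨by linarith, by linarith⟩
  · exact hoff z h0

end

/-! ### Constancy on the strip -/

lemma strip_const {F : ℂ → ℂ} (hc : ContinuousOn F closedStrip)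
    (hd : DifferentiableOn ℂ F openStrip)
    (hper : ∀ t : ℝ, F ((t : ℂ) + I) = F (t : ℂ)) {C : ℝ} {N : ℕ}
    (hb : ∀ t s : ℝ, 0 < s → s < 1 → ‖F ((t : ℂ) + (s : ℂ) * I)‖ ≤ C * (1 + |t|) ^ N) :
    ∀ t : ℝ, F (t : ℂ) = F 0 := by
  have hCS : ∀ z ∈ closedStrip, ‖F z‖ ≤ C * (1 + |z.re|) ^ N := by
    intro z hz
    obtain ⟨hz0, hz1⟩ := hz
    set sk : ℕ → ℝ := fun k => min (max z.im (1 / ((k : ℝ) + 2))) (1 - 1 / ((k : ℝ) + 2))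
      with hsk
    have hks : ∀ k : ℕ, 0 < sk k ∧ sk k < 1 := by
      intro k
      have hk2 : (0:ℝ) < (k : ℝ) + 2 := by positivity
      have hk : (0:ℝ) < 1 / ((k : ℝ) + 2) := by positivity
      have hk1 : 1 / ((k : ℝ) + 2) < 1 := by
        rw [div_lt_one hk2]
        linarith [(Nat.cast_nonneg k : (0:ℝ) ≤ (k:ℝ))]
      constructor
      · exact lt_min (lt_of_lt_of_le hk (le_max_right _ _)) (by linarith)
      · exact lt_of_le_of_lt (min_le_right _ _) (by linarith)
    have hl1 : Tendsto (fun k : ℕ => 1 / ((k : ℝ) + 2)) atTop (nhds 0) := by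
      apply squeeze_zero (fun k => by positivity) (fun k => ?_)
        tendsto_one_div_add_atTop_nhds_zero_nat
      apply one_div_le_one_div_of_le (by positivity)
      linarith
    have hl : Tendsto sk atTop (nhds z.im) := by
      have l2 : Tendsto (fun k : ℕ => max z.im (1 / ((k : ℝ) + 2))) atTop (nhds (max z.im 0)) :=
        tendsto_const_nhds.max hl1
      rw [max_eq_left hz0] at l2
      have l3 : Tendsto sk atTop (nhds (min z.im (1 - 0))) :=
        l2.min ((tendsto_const_nhds : Tendsto (fun _ : ℕ => (1:ℝ)) atTop (nhds 1)).sub hl1)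
      rw [sub_zero, min_eq_left hz1] at l3
      exact l3
    have hFl : Tendsto (fun k => F ((z.re : ℂ) + (sk k : ℂ) * I)) atTop (nhds (F z)) := by
      have hcw : ContinuousWithinAt F closedStrip z := hc z ⟨hz0, hz1⟩
      apply hcw.tendsto.comp
      apply tendsto_nhdsWithin_of_tendsto_nhds_of_eventually_within
      · have hcmap : Continuous fun s : ℝ => (z.re : ℂ) + (s : ℂ) * I := by fun_prop
        have h5 := (hcmap.tendsto z.im).comp hl
        rw [Complex.re_add_im] at h5
        exact h5
      · filter_upwards with k
        have him : ((z.re : ℂ) + (sk k : ℂ) * I).im = sk k := by simp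
        exact ⟨by rw [him]; exact (hks k).1.le, by rw [him]; exact (hks k).2.le⟩
    apply le_of_tendsto hFl.norm
    filter_upwards with k using hb z.re (sk k) (hks k).1 (hks k).2
  set Cp := max C 0 with hCp
  have hpb : ∀ z : ℂ, ‖pext F z‖ ≤ Cp * (1 + ‖z‖) ^ N := by
    intro z
    have hmem : (⟨z.re, Int.fract z.im⟩ : ℂ) ∈ closedStrip :=
      ⟨Int.fract_nonneg _, le_of_lt (Int.fract_lt_one _)⟩
    calc ‖pext F z‖ ≤ C * (1 + |z.re|) ^ N := hCS _ hmem
      _ ≤ Cp * (1 + |z.re|) ^ N := by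
          apply mul_le_mul_of_nonneg_right (le_max_left _ _) (by positivity)
      _ ≤ Cp * (1 + ‖z‖) ^ N := by
          have h6 : |z.re| ≤ ‖z‖ := Complex.abs_re_le_norm z
          have h7 : (0:ℝ) ≤ Cp := le_max_right _ _
          gcongr
  have hdiff := pext_differentiable hc hper hd
  have hconst := periodic_poly_const N (pext F) Cp hdiff hpb (fun z => pext_periodic z)
  intro t
  have h1 := hconst (t : ℂ)
  rw [pext_apply_real] at h1
  have h2 : pext F 0 = F 0 := by
    have := pext_apply_real (F := F) 0
    simpa using this
  rw [h1, h2]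

end KMSAux

/-- A (possibly unbounded) graded KMS functional `φ` on a C*-algebra `𝒜` with grading `γ`
and time evolution `α` is `α`-invariant: `φ(α_t(B)) = φ(B)` for all `B` in the domain. -/
theorem gradedKMS_alpha_invariant
    {A : Type*} [NormedRing A] [StarRing A] [CStarRing A] [NormedAlgebra ℂ A]
    [CompleteSpace A] [StarModule ℂ A]
    (γ : A ≃⋆ₐ[ℂ] A) (hγ₂ : ∀ a, γ (γ a) = a)
    (α : ℝ → A ≃⋆ₐ[ℂ] A) (hα₀ : ∀ a, α 0 a = a)
    (hαgrp : ∀ s t : ℝ, ∀ a, α s (α t a) = α (s + t) a)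
    (hαcont : ∀ a : A, Continuous fun t : ℝ => α t a)
    (hαγ : ∀ t : ℝ, ∀ a, α t (γ a) = γ (α t a))
    (D : StarSubalgebra ℂ A) (hdense : Dense (D : Set A))
    (hDγ : ∀ a ∈ D, γ a ∈ D) (hDα : ∀ t : ℝ, ∀ a ∈ D, α t a ∈ D)
    (φ : A → ℂ)
    (hKMS : ∀ a ∈ D, ∀ b ∈ D, ∃ F : ℂ → ℂ,
      ContinuousOn F closedStrip ∧ DifferentiableOn ℂ F openStrip ∧
      (∀ t : ℝ, F (t : ℂ) = φ (a * α t b)) ∧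
      (∀ t : ℝ, F ((t : ℂ) + Complex.I) = φ (α t b * γ a)) ∧
      (∃ (C : ℝ) (N : ℕ), ∀ t s : ℝ, 0 < s → s < 1 →
        ‖F ((t : ℂ) + (s : ℂ) * Complex.I)‖ ≤ C * (1 + |t|) ^ N)) :
    ∀ b ∈ D, ∀ t : ℝ, φ (α t b) = φ b := by
  intro b hb t
  obtain ⟨F, hFc, hFd, hF0, hF1, C, N, hFb⟩ := hKMS 1 D.one_mem b hb
  have hper : ∀ s : ℝ, F ((s : ℂ) + Complex.I) = F (s : ℂ) := by
    intro s
    rw [hF1 s, hF0 s, map_one, mul_one, one_mul]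
  have hconst := strip_const hFc hFd hper hFb t
  have h1 : φ (α t b) = F (t : ℂ) := by rw [hF0 t, one_mul]
  have h2 : F 0 = φ (α 0 b) := by
    have h3 := hF0 0
    rw [one_mul] at h3
    simpa using h3
  rw [h1, hconst, h2, hα₀]
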